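/- Let (X_n)_{n≥0} be a sequence of independent real-valued random variables such that each X_n is subnormal, i.e. E(e^{λ X_n}) ≤ e^{λ²/2} for every λ ∈ ℝ. Then, almost surely, the sequence c_n = X_n(ω) is a higher order oscillating sequence: for every k ≥ 1, ∑_{n=1}^N |X_n(ω)|^λ = O(N) for some λ ≥ 1 and, for every real polynomial P of degree at most k, (1/N) ∑_{n=0}^{N-1} X_n(ω) e^{2πiP(n)} → 0 as N → ∞. -/

import Mathlib

open Filter Finset MeasureTheory

open Filter Finset MeasureTheory Real ProbabilityTheory
open scoped ENNReal NNReal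

noncomputable section
namespace OscAux

/-- The exponential `e(t) = exp(2πi t)`. -/
def e (t : ℝ) : ℂ := Complex.exp (2 * Real.pi * Complex.I * t)

lemma e_eq (t : ℝ) : e t = Complex.exp ((2 * Real.pi * t : ℝ) * Complex.I) := by
  unfold e; congr 1; push_cast; ring

lemma abs_e (t : ℝ) : ‖e t‖ = 1 := by
  rw [e_eq, Complex.norm_exp_ofReal_mul_I]

lemma abs_exp_mul_I_sub_one_le (u : ℝ) :
    ‖Complex.exp ((u : ℂ) * Complex.I) - 1‖ ≤ |u| := by
  rw [Complex.exp_mul_I]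
  have h1 : (Complex.cos u + Complex.sin u * Complex.I - 1)
      = Complex.ofReal (Real.cos u - 1) + Complex.ofReal (Real.sin u) * Complex.I := by
    push_cast [Complex.ofReal_cos, Complex.ofReal_sin]
    ring
  rw [h1]
  have h2 : ‖Complex.ofReal (Real.cos u - 1) + Complex.ofReal (Real.sin u) * Complex.I‖
      = Real.sqrt ((Real.cos u - 1) ^ 2 + (Real.sin u) ^ 2) := by
    rw [Complex.norm_def, Complex.normSq_add_mul_I]
  rw [h2]
  have h3 : (Real.cos u - 1) ^ 2 + (Real.sin u) ^ 2 ≤ u ^ 2 := by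
    have hs : (Real.sin u) ^ 2 = 1 - (Real.cos u) ^ 2 := by
      have := Real.sin_sq_add_cos_sq u; nlinarith
    have hcos := Real.one_sub_sq_div_two_le_cos (x := u)
    have hcle := Real.cos_le_one u
    nlinarith
  calc Real.sqrt ((Real.cos u - 1) ^ 2 + (Real.sin u) ^ 2) ≤ Real.sqrt (u ^ 2) :=
        Real.sqrt_le_sqrt h3
    _ = |u| := Real.sqrt_sq_eq_abs u

lemma abs_e_sub_e (x y : ℝ) : ‖e x - e y‖ ≤ 2 * Real.pi * |x - y| := by
  have h : e x - e y = e y * (Complex.exp (((2 * Real.pi * (x - y) : ℝ) : ℂ) * Complex.I) - 1) := by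
    rw [mul_sub, mul_one, e_eq, e_eq, ← Complex.exp_add]
    congr 2
    push_cast; ring
  rw [h, norm_mul, abs_e, one_mul]
  calc ‖Complex.exp (((2 * Real.pi * (x - y) : ℝ) : ℂ) * Complex.I) - 1‖
      ≤ |2 * Real.pi * (x - y)| := abs_exp_mul_I_sub_one_le _
    _ = 2 * Real.pi * |x - y| := by
        rw [abs_mul]
        congr 1
        rw [abs_of_nonneg]; positivity

lemma e_add_int (x : ℝ) (z : ℤ) : e (x + z) = e x := by
  rw [e, e]
  have : (2 : ℂ) * Real.pi * Complex.I * ((x : ℝ) + (z : ℤ) : ℝ) =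
      2 * Real.pi * Complex.I * (x : ℝ) + z * (2 * Real.pi * Complex.I) := by
    push_cast; ring
  rw [this, Complex.exp_add, Complex.exp_int_mul_two_pi_mul_I, mul_one]

lemma e_re (x t : ℝ) : ((x : ℂ) * e t).re = x * Real.cos (2 * Real.pi * t) := by
  rw [e_eq, Complex.re_ofReal_mul, Complex.exp_ofReal_mul_I_re]

lemma e_im (x t : ℝ) : ((x : ℂ) * e t).im = x * Real.sin (2 * Real.pi * t) := by
  rw [e_eq, Complex.im_ofReal_mul, Complex.exp_ofReal_mul_I_im]
variable {Ω : Type*} [MeasurableSpace Ω] {μ : Measure Ω} [IsProbabilityMeasure μ]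
  {X : ℕ → Ω → ℝ}

lemma hoeffding_one_sided
    (hindep : ProbabilityTheory.iIndepFun X μ)
    (hmeas : ∀ n, Measurable (X n))
    (hsubInt : ∀ (n : ℕ) (l : ℝ), Integrable (fun ω => Real.exp (l * X n ω)) μ)
    (hsub : ∀ (n : ℕ) (l : ℝ), ∫ ω, Real.exp (l * X n ω) ∂μ ≤ Real.exp (l ^ 2 / 2))
    (a : ℕ → ℝ) (ha : ∀ n, |a n| ≤ 1) (N : ℕ) {ε : ℝ} (hε : 0 ≤ ε) :
    μ {ω | ε * N ≤ ∑ n ∈ Finset.range N, a n * X n ω}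
      ≤ ENNReal.ofReal (Real.exp (-(ε ^ 2) * N / 2)) := by
  set Y : ℕ → Ω → ℝ := fun n ω => a n * X n ω with hY
  have hYindep : iIndepFun Y μ := by
    have := hindep.comp (g := fun n (x : ℝ) => a n * x)
      (fun n => (measurable_id.const_mul (a n)))
    exact this
  have hYmeas : ∀ n, Measurable (Y n) := fun n => (hmeas n).const_mul (a n)
  have hYint : ∀ (n : ℕ) (t : ℝ), Integrable (fun ω => Real.exp (t * Y n ω)) μ := by
    intro n t
    have : (fun ω => Real.exp (t * Y n ω)) = fun ω => Real.exp ((t * a n) * X n ω) := by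
      funext ω; rw [hY]; ring_nf
    rw [this]; exact hsubInt n (t * a n)
  have hYmgf : ∀ n, mgf (Y n) μ ε ≤ Real.exp (ε ^ 2 / 2) := by
    intro n
    have h1 : mgf (Y n) μ ε = ∫ ω, Real.exp ((ε * a n) * X n ω) ∂μ := by
      unfold mgf; congr 1; funext ω; rw [hY]; ring_nf
    rw [h1]
    refine (hsub n (ε * a n)).trans ?_
    apply Real.exp_le_exp.2
    have : (ε * a n) ^ 2 ≤ ε ^ 2 := by
      have h2 := ha n
      have h3 : (a n) ^ 2 ≤ 1 := by nlinarith [abs_nonneg (a n), sq_abs (a n)]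
      nlinarith [sq_nonneg ε]
    linarith
  have hsum_eq : {ω | ε * N ≤ ∑ n ∈ Finset.range N, a n * X n ω}
      = {ω | (ε * N : ℝ) ≤ (∑ n ∈ Finset.range N, Y n) ω} := by
    ext ω; simp [hY]
  rw [hsum_eq]
  have hint : Integrable (fun ω => Real.exp (ε * (∑ n ∈ Finset.range N, Y n) ω)) μ :=
    hYindep.integrable_exp_mul_sum hYmeas (fun n _ => hYint n ε)
  have hch := measure_ge_le_exp_mul_mgf (μ := μ) (X := ∑ n ∈ Finset.range N, Y n)
    (ε * N) hε hint
  have hmgf : mgf (∑ n ∈ Finset.range N, Y n) μ ε ≤ Real.exp (ε ^ 2 * N / 2) := by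
    rw [hYindep.mgf_sum hYmeas]
    calc ∏ n ∈ Finset.range N, mgf (Y n) μ ε
        ≤ ∏ _n ∈ Finset.range N, Real.exp (ε ^ 2 / 2) := by
          apply Finset.prod_le_prod (fun n _ => mgf_nonneg) (fun n _ => hYmgf n)
      _ = Real.exp (ε ^ 2 * N / 2) := by
          rw [Finset.prod_const, Finset.card_range, ← Real.exp_nat_mul]
          congr 1; ring
  have hb : Real.exp (-ε * (ε * N)) * mgf (∑ n ∈ Finset.range N, Y n) μ ε
      ≤ Real.exp (-(ε ^ 2) * N / 2) := by
    calc Real.exp (-ε * (ε * N)) * mgf (∑ n ∈ Finset.range N, Y n) μ ε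
        ≤ Real.exp (-ε * (ε * N)) * Real.exp (ε ^ 2 * N / 2) := by
          apply mul_le_mul_of_nonneg_left hmgf (Real.exp_nonneg _)
      _ = Real.exp (-(ε ^ 2) * N / 2) := by
          rw [← Real.exp_add]; congr 1; ring
  have hne : μ {ω | (ε * N : ℝ) ≤ (∑ n ∈ Finset.range N, Y n) ω} ≠ ⊤ := measure_ne_top _ _
  rw [← ENNReal.ofReal_toReal hne]
  exact ENNReal.ofReal_le_ofReal (hch.trans hb)

lemma tail_complex
    (hindep : ProbabilityTheory.iIndepFun X μ)
    (hmeas : ∀ n, Measurable (X n))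
    (hsubInt : ∀ (n : ℕ) (l : ℝ), Integrable (fun ω => Real.exp (l * X n ω)) μ)
    (hsub : ∀ (n : ℕ) (l : ℝ), ∫ ω, Real.exp (l * X n ω) ∂μ ≤ Real.exp (l ^ 2 / 2))
    (θ : ℕ → ℝ) (N : ℕ) {ε : ℝ} (hε : 0 ≤ ε) :
    μ {ω | ε * N ≤ ‖∑ n ∈ Finset.range N, (X n ω : ℂ) * e (θ n)‖}
      ≤ ENNReal.ofReal (4 * Real.exp (-(ε ^ 2) * N / 8)) := by
  set a : ℕ → ℝ := fun n => Real.cos (2 * Real.pi * θ n) with ha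
  set b : ℕ → ℝ := fun n => Real.sin (2 * Real.pi * θ n) with hb
  have hre : ∀ ω, (∑ n ∈ Finset.range N, (X n ω : ℂ) * e (θ n)).re
      = ∑ n ∈ Finset.range N, a n * X n ω := by
    intro ω
    rw [Complex.re_sum]
    exact Finset.sum_congr rfl fun n _ => by rw [e_re, ha, mul_comm]
  have him : ∀ ω, (∑ n ∈ Finset.range N, (X n ω : ℂ) * e (θ n)).im
      = ∑ n ∈ Finset.range N, b n * X n ω := by
    intro ω
    rw [Complex.im_sum]
    exact Finset.sum_congr rfl fun n _ => by rw [e_im, hb, mul_comm]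
  have hsubset : {ω | ε * N ≤ ‖∑ n ∈ Finset.range N, (X n ω : ℂ) * e (θ n)‖}
      ⊆ ({ω | (ε/2) * N ≤ ∑ n ∈ Finset.range N, a n * X n ω}
        ∪ {ω | (ε/2) * N ≤ ∑ n ∈ Finset.range N, (-a n) * X n ω})
        ∪ ({ω | (ε/2) * N ≤ ∑ n ∈ Finset.range N, b n * X n ω}
        ∪ {ω | (ε/2) * N ≤ ∑ n ∈ Finset.range N, (-b n) * X n ω}) := by
    intro ω hω
    simp only [Set.mem_setOf_eq] at hω
    have habs := Complex.norm_le_abs_re_add_abs_im (∑ n ∈ Finset.range N, (X n ω : ℂ) * e (θ n))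
    rw [hre ω, him ω] at habs
    have hcase : (ε/2) * N ≤ |∑ n ∈ Finset.range N, a n * X n ω|
        ∨ (ε/2) * N ≤ |∑ n ∈ Finset.range N, b n * X n ω| := by
      by_contra hcon
      push_neg at hcon
      have := hω.trans habs
      linarith [hcon.1, hcon.2]
    have hneg : ∀ c : ℕ → ℝ, (∑ n ∈ Finset.range N, (-c n) * X n ω)
        = -(∑ n ∈ Finset.range N, c n * X n ω) := by
      intro c; rw [← Finset.sum_neg_distrib]; exact Finset.sum_congr rfl fun n _ => by ring
    rcases hcase with h | h
    · left
      rcases abs_cases (∑ n ∈ Finset.range N, a n * X n ω) with ⟨he, _⟩ | ⟨he, _⟩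
      · left; exact Set.mem_setOf_eq ▸ (he ▸ h)
      · right; simp only [Set.mem_setOf_eq, hneg a]; linarith [he ▸ h]
    · right
      rcases abs_cases (∑ n ∈ Finset.range N, b n * X n ω) with ⟨he, _⟩ | ⟨he, _⟩
      · left; exact Set.mem_setOf_eq ▸ (he ▸ h)
      · right; simp only [Set.mem_setOf_eq, hneg b]; linarith [he ▸ h]
  have hε2 : (0:ℝ) ≤ ε / 2 := by linarith
  have key : ∀ c : ℕ → ℝ, (∀ n, |c n| ≤ 1) →
      μ {ω | (ε/2) * N ≤ ∑ n ∈ Finset.range N, c n * X n ω}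
        ≤ ENNReal.ofReal (Real.exp (-(ε ^ 2) * N / 8)) := by
    intro c hc
    have := hoeffding_one_sided hindep hmeas hsubInt hsub c hc N hε2
    convert this using 3
    ring
  have h1 := key a (fun n => Real.abs_cos_le_one _)
  have h2 := key (fun n => -a n) (fun n => by rw [abs_neg]; exact Real.abs_cos_le_one _)
  have h3 := key b (fun n => Real.abs_sin_le_one _)
  have h4 := key (fun n => -b n) (fun n => by rw [abs_neg]; exact Real.abs_sin_le_one _)
  calc μ {ω | ε * N ≤ ‖∑ n ∈ Finset.range N, (X n ω : ℂ) * e (θ n)‖}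
      ≤ _ := measure_mono hsubset
    _ ≤ _ + _ := measure_union_le _ _
    _ ≤ (ENNReal.ofReal (Real.exp (-(ε ^ 2) * N / 8)) + ENNReal.ofReal (Real.exp (-(ε ^ 2) * N / 8)))
        + (ENNReal.ofReal (Real.exp (-(ε ^ 2) * N / 8)) + ENNReal.ofReal (Real.exp (-(ε ^ 2) * N / 8))) := by
        gcongr <;> first
          | exact (measure_union_le _ _).trans (by gcongr)
    _ = ENNReal.ofReal (4 * Real.exp (-(ε ^ 2) * N / 8)) := by
        rw [← ENNReal.ofReal_add (Real.exp_nonneg _) (Real.exp_nonneg _),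
          ← ENNReal.ofReal_add (by positivity) (by positivity)]
        congr 1; ring

lemma tail_abs
    (hindep : ProbabilityTheory.iIndepFun X μ)
    (hmeas : ∀ n, Measurable (X n))
    (hsubInt : ∀ (n : ℕ) (l : ℝ), Integrable (fun ω => Real.exp (l * X n ω)) μ)
    (hsub : ∀ (n : ℕ) (l : ℝ), ∫ ω, Real.exp (l * X n ω) ∂μ ≤ Real.exp (l ^ 2 / 2))
    (N : ℕ) :
    μ {ω | (3 : ℝ) * N ≤ ∑ n ∈ Finset.range N, |X n ω|}
      ≤ ENNReal.ofReal ((2 * Real.exp (1/2) * Real.exp (-3)) ^ N) := by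
  set Y : ℕ → Ω → ℝ := fun n ω => |X n ω| with hY
  have hYindep : iIndepFun Y μ :=
    hindep.comp (g := fun _ (x : ℝ) => |x|) (fun n => measurable_abs)
  have hYmeas : ∀ n, Measurable (Y n) := fun n => (hmeas n).abs
  have hdom : ∀ (n : ℕ) (ω : Ω), Real.exp (|X n ω|) ≤ Real.exp (X n ω) + Real.exp (-(X n ω)) := by
    intro n ω
    rcases abs_cases (X n ω) with ⟨h1, _⟩ | ⟨h1, _⟩ <;> rw [h1] <;>
      nlinarith [Real.exp_nonneg (X n ω), Real.exp_nonneg (-(X n ω))]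
  have hYint : ∀ n, Integrable (fun ω => Real.exp (1 * Y n ω)) μ := by
    intro n
    have hint : Integrable (fun ω => Real.exp (X n ω) + Real.exp (-(X n ω))) μ := by
      have h1 := hsubInt n 1
      have h2 := hsubInt n (-1)
      simp only [one_mul] at h1
      have h2' : Integrable (fun ω => Real.exp (-(X n ω))) μ := by
        convert h2 using 2 with ω; ring_nf
      exact h1.add h2'
    refine hint.mono ?_ ?_
    · exact (((hYmeas n).const_mul 1).exp).aestronglyMeasurable
    · filter_upwards with ω
      rw [Real.norm_eq_abs, Real.norm_eq_abs, abs_of_nonneg (Real.exp_nonneg _),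
        abs_of_nonneg (by positivity), one_mul]
      exact hdom n ω
  have hYmgf : ∀ n, mgf (Y n) μ 1 ≤ 2 * Real.exp (1/2) := by
    intro n
    have h1 := hsubInt n 1
    simp only [one_mul] at h1
    have h2 := hsubInt n (-1)
    have h2' : Integrable (fun ω => Real.exp (-(X n ω))) μ := by
      convert h2 using 2 with ω; ring_nf
    have hYint1 : Integrable (fun ω => Real.exp (Y n ω)) μ := by
      have := hYint n; simpa only [one_mul] using this
    calc mgf (Y n) μ 1 = ∫ ω, Real.exp (|X n ω|) ∂μ := by
          unfold mgf; congr 1; funext ω; simp [hY]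
      _ ≤ ∫ ω, (Real.exp (X n ω) + Real.exp (-(X n ω))) ∂μ := by
          apply integral_mono (by simpa only [one_mul] using hYint n) (h1.add h2')
          exact fun ω => hdom n ω
      _ = (∫ ω, Real.exp (X n ω) ∂μ) + ∫ ω, Real.exp (-(X n ω)) ∂μ := integral_add h1 h2'
      _ ≤ Real.exp ((1:ℝ) ^ 2 / 2) + Real.exp ((-1:ℝ) ^ 2 / 2) := by
          have hs1 := hsub n 1
          have hs2 := hsub n (-1)
          simp only [one_mul] at hs1
          have hs2' : ∫ ω, Real.exp (-(X n ω)) ∂μ ≤ Real.exp ((-1:ℝ) ^ 2 / 2) := by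
            calc ∫ ω, Real.exp (-(X n ω)) ∂μ = ∫ ω, Real.exp ((-1) * X n ω) ∂μ := by
                  congr 1; funext ω; ring_nf
              _ ≤ _ := hs2
          exact add_le_add hs1 hs2'
      _ = 2 * Real.exp (1/2) := by norm_num; ring
  have hint : Integrable (fun ω => Real.exp (1 * (∑ n ∈ Finset.range N, Y n) ω)) μ :=
    hYindep.integrable_exp_mul_sum hYmeas (fun n _ => hYint n)
  have hch := measure_ge_le_exp_mul_mgf (μ := μ) (X := ∑ n ∈ Finset.range N, Y n)
    ((3:ℝ) * N) zero_le_one hint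
  have hmgf : mgf (∑ n ∈ Finset.range N, Y n) μ 1 ≤ (2 * Real.exp (1/2)) ^ N := by
    rw [hYindep.mgf_sum hYmeas]
    calc ∏ n ∈ Finset.range N, mgf (Y n) μ 1
        ≤ ∏ _n ∈ Finset.range N, (2 * Real.exp (1/2)) :=
          Finset.prod_le_prod (fun n _ => mgf_nonneg) (fun n _ => hYmgf n)
      _ = (2 * Real.exp (1/2)) ^ N := by rw [Finset.prod_const, Finset.card_range]
  have hseteq : {ω | (3:ℝ) * N ≤ ∑ n ∈ Finset.range N, |X n ω|}
      = {ω | (3:ℝ) * N ≤ (∑ n ∈ Finset.range N, Y n) ω} := by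
    ext ω; simp [hY]
  rw [hseteq, ← ENNReal.ofReal_toReal (measure_ne_top μ _)]
  apply ENNReal.ofReal_le_ofReal
  refine hch.trans ?_
  calc Real.exp (-1 * (3 * N)) * mgf (∑ n ∈ Finset.range N, Y n) μ 1
      ≤ Real.exp (-1 * (3 * N)) * (2 * Real.exp (1/2)) ^ N := by
        apply mul_le_mul_of_nonneg_left hmgf (Real.exp_nonneg _)
    _ = (2 * Real.exp (1/2) * Real.exp (-3)) ^ N := by
        have h30 : Real.exp (-1 * (3 * (N:ℝ))) = Real.exp (-3) ^ N := by
          rw [← Real.exp_nat_mul]; congr 1; ring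
        rw [h30, mul_pow, mul_pow]; ring

/-- Grid resolution. -/
def M (k N : ℕ) : ℕ := (k + 1) * N ^ (k + 1)

/-- A grid polynomial-phase function. -/
def grid (k N : ℕ) (c : Fin (k + 1) → Fin (M k N)) (n : ℕ) : ℝ :=
  ∑ j : Fin (k + 1), ((c j : ℝ) / (M k N : ℝ)) * (n : ℝ) ^ (j : ℕ)

lemma approx (k N : ℕ) (hN : 1 ≤ N) (P : Polynomial ℝ) (hP : P.natDegree ≤ k) :
    ∃ c : Fin (k + 1) → Fin (M k N), ∀ n ∈ Finset.range N,
      ‖e (P.eval (n : ℝ)) - e (grid k N c n)‖ ≤ 2 * Real.pi / N := by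
  have hM : 0 < M k N := by
    have : 0 < N ^ (k+1) := Nat.pow_pos hN
    exact Nat.mul_pos (Nat.succ_pos k) this
  have hMR : (0:ℝ) < (M k N : ℝ) := by exact_mod_cast hM
  have hc : ∀ j : Fin (k+1), (⌊Int.fract (P.coeff (j:ℕ)) * (M k N : ℝ)⌋).toNat < M k N := by
    intro j
    have h0 : (0:ℝ) ≤ Int.fract (P.coeff (j:ℕ)) := Int.fract_nonneg _
    have h1 : Int.fract (P.coeff (j:ℕ)) < 1 := Int.fract_lt_one _
    have hy : Int.fract (P.coeff (j:ℕ)) * (M k N : ℝ) < (M k N : ℝ) := by nlinarith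
    have hfl : ⌊Int.fract (P.coeff (j:ℕ)) * (M k N : ℝ)⌋ < (M k N : ℤ) :=
      Int.floor_lt.mpr (by exact_mod_cast hy)
    omega
  set c : Fin (k+1) → Fin (M k N) :=
    fun j => ⟨(⌊Int.fract (P.coeff (j:ℕ)) * (M k N : ℝ)⌋).toNat, hc j⟩ with hcdef
  refine ⟨c, ?_⟩
  intro n hn
  rw [Finset.mem_range] at hn
  -- the fractional-part phase
  set g : ℝ := ∑ j : Fin (k+1), Int.fract (P.coeff (j:ℕ)) * (n : ℝ) ^ (j : ℕ) with hg
  set z : ℤ := ∑ j : Fin (k+1), ⌊P.coeff (j:ℕ)⌋ * (n : ℤ) ^ (j : ℕ) with hz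
  have heval : P.eval (n : ℝ) = g + (z : ℝ) := by
    rw [Polynomial.eval_eq_sum_range' (Nat.lt_succ_of_le hP) (n : ℝ)]
    rw [← Fin.sum_univ_eq_sum_range (fun j => P.coeff j * (n:ℝ) ^ j) (k+1)]
    rw [hg, hz]
    push_cast
    rw [← Finset.sum_add_distrib]
    refine Finset.sum_congr rfl fun j _ => ?_
    rw [← add_mul, Int.fract_add_floor]
  have hePeq : e (P.eval (n : ℝ)) = e g := by rw [heval, e_add_int]
  rw [hePeq]
  have hterm : ∀ j : Fin (k+1),
      |Int.fract (P.coeff (j:ℕ)) - ((c j : ℕ) : ℝ) / (M k N : ℝ)| ≤ 1 / (M k N : ℝ) := by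
    intro j
    have h0 := Int.fract_nonneg (P.coeff (j:ℕ))
    have hy0 : (0:ℝ) ≤ Int.fract (P.coeff (j:ℕ)) * (M k N : ℝ) := mul_nonneg h0 hMR.le
    have hcj : ((c j : ℕ) : ℝ) = ((⌊Int.fract (P.coeff (j:ℕ)) * (M k N : ℝ)⌋ : ℤ) : ℝ) := by
      simp only [hcdef]
      exact_mod_cast Int.toNat_of_nonneg (Int.floor_nonneg.mpr hy0)
    have hfl1 := Int.floor_le (Int.fract (P.coeff (j:ℕ)) * (M k N : ℝ))
    have hfl2 := Int.lt_floor_add_one (Int.fract (P.coeff (j:ℕ)) * (M k N : ℝ))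
    have e1 : ((⌊Int.fract (P.coeff (j:ℕ)) * (M k N : ℝ)⌋ : ℤ) : ℝ) / (M k N : ℝ) * (M k N : ℝ)
        = ((⌊Int.fract (P.coeff (j:ℕ)) * (M k N : ℝ)⌋ : ℤ) : ℝ) := div_mul_cancel₀ _ hMR.ne'
    have e2 : 1 / (M k N : ℝ) * (M k N : ℝ) = 1 := by field_simp
    rw [abs_le, hcj]
    constructor
    · nlinarith [hfl1, hfl2, hMR, e1, e2]
    · nlinarith [hfl1, hfl2, hMR, e1, e2]
  have hgrid_close : |g - grid k N c n| ≤ 1 / N := by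
    have hsub : g - grid k N c n
        = ∑ j : Fin (k+1), (Int.fract (P.coeff (j:ℕ)) - ((c j : ℕ):ℝ)/(M k N : ℝ)) * (n:ℝ)^(j:ℕ) := by
      rw [hg]
      unfold grid
      rw [← Finset.sum_sub_distrib]
      exact Finset.sum_congr rfl fun j _ => by ring
    rw [hsub]
    calc |∑ j : Fin (k+1), (Int.fract (P.coeff (j:ℕ)) - ((c j : ℕ):ℝ)/(M k N : ℝ)) * (n:ℝ)^(j:ℕ)|
        ≤ ∑ j : Fin (k+1), |(Int.fract (P.coeff (j:ℕ)) - ((c j : ℕ):ℝ)/(M k N : ℝ)) * (n:ℝ)^(j:ℕ)| :=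
          Finset.abs_sum_le_sum_abs _ _
      _ ≤ ∑ _j : Fin (k+1), (1/(M k N : ℝ)) * (N:ℝ)^k := by
          apply Finset.sum_le_sum
          intro j _
          rw [abs_mul, abs_of_nonneg (a := (n:ℝ)^(j:ℕ)) (by positivity)]
          have hnN : (n:ℝ)^(j:ℕ) ≤ (N:ℝ)^k := by
            calc (n:ℝ)^(j:ℕ) ≤ (N:ℝ)^(j:ℕ) :=
                  pow_le_pow_left₀ (by positivity) (by exact_mod_cast hn.le) _
              _ ≤ (N:ℝ)^k := pow_le_pow_right₀ (by exact_mod_cast hN) (Nat.lt_succ_iff.mp j.isLt)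
          exact mul_le_mul (hterm j) hnN (by positivity) (by positivity)
      _ = ((k:ℝ)+1) * ((1/(M k N : ℝ)) * (N:ℝ)^k) := by
          rw [Finset.sum_const, Finset.card_univ, Fintype.card_fin, nsmul_eq_mul]
          push_cast
          ring
      _ = 1/N := by
          have hMr : (M k N : ℝ) = ((k:ℝ)+1) * (N:ℝ)^(k+1) := by
            unfold M; push_cast; ring
          have hN0 : (0:ℝ) < (N:ℝ) := by exact_mod_cast hN
          rw [hMr, pow_succ]
          field_simp
  calc ‖e g - e (grid k N c n)‖ ≤ 2 * Real.pi * |g - grid k N c n| :=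
        abs_e_sub_e _ _
    _ ≤ 2 * Real.pi * (1 / N) := by
        apply mul_le_mul_of_nonneg_left hgrid_close (by positivity)
    _ = 2 * Real.pi / N := by ring

/-- The bad event for the net at scale `N`. -/
def badB (X : ℕ → Ω → ℝ) (k m N : ℕ) : Set Ω :=
  ⋃ c : Fin (k + 1) → Fin (M k N),
    {ω | (1 / ((m : ℝ) + 1)) * N
      ≤ ‖∑ n ∈ Finset.range N, (X n ω : ℂ) * e (grid k N c n)‖}

lemma badB_measure_le
    (hindep : ProbabilityTheory.iIndepFun X μ)
    (hmeas : ∀ n, Measurable (X n))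
    (hsubInt : ∀ (n : ℕ) (l : ℝ), Integrable (fun ω => Real.exp (l * X n ω)) μ)
    (hsub : ∀ (n : ℕ) (l : ℝ), ∫ ω, Real.exp (l * X n ω) ∂μ ≤ Real.exp (l ^ 2 / 2))
    (k m N : ℕ) :
    μ (badB X k m N) ≤ ENNReal.ofReal
      ((((k:ℝ) + 1) * (N:ℝ) ^ (k+1)) ^ (k+1)
        * (4 * Real.exp (-((1 / ((m:ℝ) + 1)) ^ 2) * N / 8))) := by
  have hε : (0:ℝ) ≤ 1 / ((m : ℝ) + 1) := by positivity
  calc μ (badB X k m N)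
      ≤ ∑' c : Fin (k + 1) → Fin (M k N),
        μ {ω | (1 / ((m : ℝ) + 1)) * N
          ≤ ‖∑ n ∈ Finset.range N, (X n ω : ℂ) * e (grid k N c n)‖} :=
        measure_iUnion_le _
    _ ≤ ∑' _c : Fin (k + 1) → Fin (M k N),
        ENNReal.ofReal (4 * Real.exp (-((1 / ((m:ℝ) + 1)) ^ 2) * N / 8)) := by
        apply ENNReal.tsum_le_tsum
        intro c
        exact tail_complex hindep hmeas hsubInt hsub (grid k N c) N hε
    _ = (Fintype.card (Fin (k + 1) → Fin (M k N)) : ℝ≥0∞)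
        * ENNReal.ofReal (4 * Real.exp (-((1 / ((m:ℝ) + 1)) ^ 2) * N / 8)) := by
        rw [tsum_fintype, Finset.sum_const, Finset.card_univ, nsmul_eq_mul]
    _ ≤ ENNReal.ofReal ((((k:ℝ) + 1) * (N:ℝ) ^ (k+1)) ^ (k+1)
        * (4 * Real.exp (-((1 / ((m:ℝ) + 1)) ^ 2) * N / 8))) := by
        rw [← ENNReal.ofReal_natCast, ← ENNReal.ofReal_mul (by positivity)]
        apply ENNReal.ofReal_le_ofReal
        apply mul_le_mul_of_nonneg_right _ (by positivity)
        rw [Fintype.card_fun, Fintype.card_fin, Fintype.card_fin]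
        have : ((M k N ^ (k+1) : ℕ) : ℝ) = ((M k N : ℝ)) ^ (k+1) := by push_cast; ring
        rw [this]
        have hM : (M k N : ℝ) = ((k:ℝ) + 1) * (N:ℝ) ^ (k+1) := by unfold M; push_cast; ring
        rw [hM]

lemma summable_badB_bound (k m : ℕ) :
    Summable (fun N : ℕ => (((k:ℝ) + 1) * (N:ℝ) ^ (k+1)) ^ (k+1)
      * (4 * Real.exp (-((1 / ((m:ℝ) + 1)) ^ 2) * N / 8))) := by
  set r : ℝ := Real.exp (-((1 / ((m:ℝ) + 1)) ^ 2 / 8)) with hr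
  have hr1 : ‖r‖ < 1 := by
    rw [hr, Real.norm_eq_abs, abs_of_nonneg (Real.exp_nonneg _)]
    refine Real.exp_lt_one_iff.mpr ?_
    have : (0:ℝ) < (1 / ((m:ℝ) + 1)) ^ 2 / 8 := by positivity
    linarith
  have hbase : Summable (fun N : ℕ => (N:ℝ) ^ ((k+1)*(k+1)) * r ^ N) :=
    summable_pow_mul_geometric_of_norm_lt_one _ hr1
  refine ((hbase.mul_left (((k:ℝ)+1)^(k+1) * 4)).congr fun N => ?_)
  have hexp : Real.exp (-((1 / ((m:ℝ) + 1)) ^ 2) * N / 8) = r ^ N := by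
    rw [hr, ← Real.exp_nat_mul]; congr 1; ring
  rw [hexp, mul_pow, ← pow_mul]
  ring

lemma summable_badA_bound : Summable (fun N : ℕ => (2 * Real.exp (1/2) * Real.exp (-3)) ^ N) := by
  apply summable_geometric_of_lt_one
  · positivity
  · have h2 : (5:ℝ)/2 + 1 ≤ Real.exp (5/2) := Real.add_one_le_exp _
    have h3 : Real.exp ((1:ℝ)/2) * Real.exp (-3) = (Real.exp (5/2))⁻¹ := by
      rw [← Real.exp_add, ← Real.exp_neg]; norm_num
    have h4 : (0:ℝ) < Real.exp (5/2) := Real.exp_pos _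
    have h5 : (Real.exp (5/2))⁻¹ < 1/2 := by
      rw [inv_lt_comm₀ h4 (by norm_num)]
      norm_num
      linarith
    calc 2 * Real.exp (1/2) * Real.exp (-3) = 2 * (Real.exp (5/2))⁻¹ := by rw [mul_assoc, h3]
      _ < 2 * (1/2) := by linarith
      _ = 1 := by norm_num
end OscAux

open OscAux

/-- Let `(X n)` be independent real random variables, each subnormal, i.e.
`E(e^{l·X_n}) ≤ e^{l²/2}` for every real `l`. Then almost surely the sequence `c n = X n ω`
is higher order oscillating: `∑_{n=1}^N |c n| ^ l = O(N)` for some `l ≥ 1` and, for every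
`k ≥ 1` and every real polynomial `P` of degree at most `k`,
`(1/N) ∑_{n=0}^{N-1} c n * e^{2πi P(n)} → 0`. -/
theorem almostSurely_higherOrderOscillating_of_indep_subnormal
    {Ω : Type*} [MeasurableSpace Ω] (μ : Measure Ω) [IsProbabilityMeasure μ]
    (X : ℕ → Ω → ℝ)
    (hindep : ProbabilityTheory.iIndepFun X μ)
    (hmeas : ∀ n, Measurable (X n))
    (hsubInt : ∀ (n : ℕ) (l : ℝ), Integrable (fun ω => Real.exp (l * X n ω)) μ)
    (hsub : ∀ (n : ℕ) (l : ℝ), ∫ ω, Real.exp (l * X n ω) ∂μ ≤ Real.exp (l ^ 2 / 2)) :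
    ∀ᵐ ω ∂μ, ∀ k : ℕ, 1 ≤ k →
      ((∃ l : ℝ, 1 ≤ l ∧
          (fun N : ℕ => ∑ n ∈ Finset.Icc 1 N, |X n ω| ^ l)
            =O[atTop] (fun N : ℕ => (N : ℝ))) ∧
        ∀ P : Polynomial ℝ, P.natDegree ≤ k →
          Tendsto (fun N : ℕ => (N : ℂ)⁻¹ *
              ∑ n ∈ Finset.range N,
                (X n ω : ℂ) * Complex.exp (2 * Real.pi * Complex.I * (P.eval (n : ℝ))))
            atTop (nhds 0)) := by
  classical
  set badA : ℕ → Set Ω := fun N => {ω | (3:ℝ) * N ≤ ∑ n ∈ Finset.range N, |X n ω|} with hbadA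
  have hA : ∀ᵐ ω ∂μ, ∀ᶠ N in atTop, ω ∉ badA N := by
    apply MeasureTheory.ae_eventually_notMem
    refine ne_top_of_le_ne_top ?_
      (ENNReal.tsum_le_tsum (fun N => tail_abs hindep hmeas hsubInt hsub N))
    rw [← ENNReal.ofReal_tsum_of_nonneg (fun N => by positivity) summable_badA_bound]
    exact ENNReal.ofReal_ne_top
  have hB : ∀ᵐ ω ∂μ, ∀ km : ℕ × ℕ, ∀ᶠ N in atTop, ω ∉ OscAux.badB X km.1 km.2 N := by
    rw [MeasureTheory.ae_all_iff]
    intro km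
    apply MeasureTheory.ae_eventually_notMem
    refine ne_top_of_le_ne_top ?_
      (ENNReal.tsum_le_tsum (fun N => badB_measure_le hindep hmeas hsubInt hsub km.1 km.2 N))
    rw [← ENNReal.ofReal_tsum_of_nonneg (fun N => by positivity)
      (summable_badB_bound km.1 km.2)]
    exact ENNReal.ofReal_ne_top
  filter_upwards [hA, hB] with ω hAω hBω
  intro k _hk
  have hπ : (0:ℝ) < Real.pi := Real.pi_pos
  constructor
  · refine ⟨1, le_refl 1, ?_⟩
    rw [Asymptotics.isBigO_iff]
    refine ⟨6, ?_⟩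
    have h1 : ∀ᶠ N in atTop, ω ∉ badA (N + 1) := (tendsto_add_atTop_nat 1).eventually hAω
    filter_upwards [h1, eventually_ge_atTop 1] with N hN1 hN2
    simp only [Real.rpow_one]
    have hsum : ∑ n ∈ Finset.Icc 1 N, |X n ω| ≤ ∑ n ∈ Finset.range (N+1), |X n ω| := by
      apply Finset.sum_le_sum_of_subset_of_nonneg
      · intro i hi
        rw [Finset.mem_range]
        rw [Finset.mem_Icc] at hi
        omega
      · intro i _ _; positivity
    have hlt : ∑ n ∈ Finset.range (N+1), |X n ω| < 3 * (N+1 : ℕ) := by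
      have := hN1
      rw [hbadA] at this
      simp only [Set.mem_setOf_eq, not_le] at this
      exact this
    rw [Real.norm_eq_abs, Real.norm_eq_abs]
    have hNpos : (1:ℝ) ≤ (N:ℝ) := by exact_mod_cast hN2
    have habs1 : abs (∑ n ∈ Finset.Icc 1 N, |X n ω|) = ∑ n ∈ Finset.Icc 1 N, |X n ω| := by
      apply abs_of_nonneg; positivity
    have habs2 : |(N:ℝ)| = (N:ℝ) := abs_of_nonneg (by positivity)
    rw [habs1, habs2]
    push_cast at hlt
    calc ∑ n ∈ Finset.Icc 1 N, |X n ω| ≤ ∑ n ∈ Finset.range (N+1), |X n ω| := hsum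
      _ ≤ 3 * ((N:ℝ) + 1) := hlt.le
      _ ≤ 6 * (N:ℝ) := by linarith
  · intro P hP
    rw [NormedAddCommGroup.tendsto_nhds_zero]
    intro ε hε
    obtain ⟨m, hm⟩ := exists_nat_one_div_lt (half_pos hε)
    obtain ⟨N₀, hN₀⟩ := exists_nat_gt (12 * Real.pi / ε)
    filter_upwards [hAω, hBω (k, m), eventually_ge_atTop 1, eventually_ge_atTop N₀]
      with N hA' hB' hN1 hN0
    have hNR : (1:ℝ) ≤ (N:ℝ) := by exact_mod_cast hN1
    have hNpos : (0:ℝ) < (N:ℝ) := by linarith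
    obtain ⟨c, hc⟩ := approx k N hN1 P hP
    -- sums
    set S : ℂ := ∑ n ∈ Finset.range N, (X n ω : ℂ) * e (P.eval (n : ℝ)) with hS
    set Sg : ℂ := ∑ n ∈ Finset.range N, (X n ω : ℂ) * e (grid k N c n) with hSg
    have hAbound : ∑ n ∈ Finset.range N, |X n ω| < 3 * N := by
      have := hA'
      rw [hbadA] at this
      simp only [Set.mem_setOf_eq, not_le] at this
      exact this
    have hBbound : ‖Sg‖ < (1 / ((m:ℝ) + 1)) * N := by
      rw [OscAux.badB] at hB'
      simp only [Set.mem_iUnion, Set.mem_setOf_eq, not_exists, not_le] at hB'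
      exact hB' c
    have hdiff : ‖S - Sg‖ ≤ 6 * Real.pi := by
      rw [hS, hSg, ← Finset.sum_sub_distrib]
      calc ‖∑ n ∈ Finset.range N,
            ((X n ω : ℂ) * e (P.eval (n:ℝ)) - (X n ω : ℂ) * e (grid k N c n))‖
          ≤ ∑ n ∈ Finset.range N,
            ‖(X n ω : ℂ) * e (P.eval (n:ℝ)) - (X n ω : ℂ) * e (grid k N c n)‖ := by
            exact norm_sum_le (Finset.range N) _
        _ ≤ ∑ n ∈ Finset.range N, |X n ω| * (2 * Real.pi / N) := by
            apply Finset.sum_le_sum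
            intro n hn
            rw [← mul_sub, norm_mul, Complex.norm_real, Real.norm_eq_abs]
            exact mul_le_mul_of_nonneg_left (hc n hn) (abs_nonneg _)
        _ = (∑ n ∈ Finset.range N, |X n ω|) * (2 * Real.pi / N) := by
            rw [← Finset.sum_mul]
        _ ≤ (3 * N) * (2 * Real.pi / N) := by
            apply mul_le_mul_of_nonneg_right hAbound.le (by positivity)
        _ = 6 * Real.pi := by field_simp; ring
    have hgoal : ‖(N : ℂ)⁻¹ * S‖ < ε := by
      rw [norm_mul, norm_inv, Complex.norm_natCast]
      have h1 : ‖S‖ ≤ ‖Sg‖ + ‖S - Sg‖ := by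
        calc ‖S‖ = ‖Sg + (S - Sg)‖ := by congr 1; ring
          _ ≤ _ := norm_add_le _ _
      have h2 : ‖S‖ < (1 / ((m:ℝ) + 1)) * N + 6 * Real.pi := by
        calc ‖S‖ ≤ ‖Sg‖ + ‖S - Sg‖ := h1
          _ < (1 / ((m:ℝ) + 1)) * N + 6 * Real.pi := by
              exact add_lt_add_of_lt_of_le hBbound hdiff
      calc (N:ℝ)⁻¹ * ‖S‖ < (N:ℝ)⁻¹ * ((1 / ((m:ℝ) + 1)) * N + 6 * Real.pi) := by
            apply mul_lt_mul_of_pos_left h2 (by positivity)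
        _ = 1 / ((m:ℝ) + 1) + 6 * Real.pi / N := by
            rw [mul_add, mul_comm (1 / ((m:ℝ) + 1)) ((N:ℝ)), inv_mul_cancel_left₀ hNpos.ne',
              inv_mul_eq_div]
        _ < ε / 2 + ε / 2 := by
            apply add_lt_add hm
            rw [div_lt_iff₀ hNpos]
            have hN0R : 12 * Real.pi / ε < (N:ℝ) := by
              refine hN₀.trans_le ?_
              exact_mod_cast hN0
            rw [div_lt_iff₀ hε] at hN0R
            linarith
        _ = ε := by ring
    exact hgoal
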